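/- With the tt*-Toda setup and all eigenvalues of R unimodular and S + S^T nondegenerate with n_+ positive eigenvalues: if n = 2m, then n_+ = m + 1 + Σ_{j=1}^{m-1} (-1)^{ν_j - j}, where ν_j is the number of eigenvalue pairs e^{±iθ} of R with θ in (0, jπ/m) (equivalently, the number of roots of p̃ greater than 2cos(jπ/m)). -/

import Mathlib

open Polynomial Matrix Finset Complex

lemma aux_charpoly_diagonal {K : Type*} [CommRing K] {n : Type*} [DecidableEq n] [Fintype n]
    (d : n → K) : (Matrix.diagonal d).charpoly = ∏ i, (X - C (d i)) := by
  have h : charmatrix (Matrix.diagonal d) = Matrix.diagonal fun i => X - C (d i) := by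
    ext i j
    by_cases h : i = j
    · subst h; simp [charmatrix_apply, Matrix.diagonal_apply_eq]
    · simp [charmatrix_apply, Matrix.diagonal_apply_ne _ h]
  rw [Matrix.charpoly, h, Matrix.det_diagonal]

lemma aux_charpoly_conj {K : Type*} [Field K] {n : Type*} [DecidableEq n] [Fintype n]
    (V A : Matrix n n K) (hV : IsUnit V.det) :
    (V * A * V⁻¹).charpoly = A.charpoly := by
  have hVV : V * V⁻¹ = 1 := Matrix.mul_nonsing_inv V hV
  have hVV' : V⁻¹ * V = 1 := Matrix.nonsing_inv_mul V hV
  have h1 : charmatrix (V * A * V⁻¹)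
      = ((C : K →+* K[X]).mapMatrix V) * charmatrix A * ((C : K →+* K[X]).mapMatrix V⁻¹) := by
    unfold charmatrix
    rw [mul_sub, sub_mul]
    congr 1
    · rw [mul_assoc, (Matrix.scalar_commute (X : K[X]) (fun r => Commute.all _ r) _)]
      rw [← mul_assoc, ← RingHom.map_mul, hVV, _root_.map_one, one_mul]
    · rw [← RingHom.map_mul, ← RingHom.map_mul]
  rw [Matrix.charpoly, Matrix.charpoly, h1, Matrix.det_mul, Matrix.det_mul]
  rw [mul_comm, ← mul_assoc, ← Matrix.det_mul, ← RingHom.map_mul, hVV', _root_.map_one, Matrix.det_one, one_mul]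


lemma aux_natDegree_q (c : ℝ) : (X ^ 2 - C c * X + 1 : ℝ[X]).natDegree ≤ 2 := by
  compute_degree

lemma aux_reflect_q (c : ℝ) : Polynomial.reflect 2 (X ^ 2 - C c * X + 1 : ℝ[X]) = X ^ 2 - C c * X + 1 := by
  have h2 := aux_natDegree_q c
  ext i
  rw [coeff_reflect]
  rcases i with _ | _ | _ | i
  · rw [revAt_le (by norm_num)]
    simp [coeff_one]
  · rw [revAt_le (by norm_num)]
  · rw [revAt_le (by norm_num)]
    simp [coeff_one]
  · have hgt : 2 < i + 3 := by omega
    rw [show (revAt 2) (i + 3) = i + 3 by rw [← revAtFun_eq]; simp [revAtFun, Nat.not_le.mpr hgt]]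

lemma aux_reflect_prod {m : ℕ} (c : Fin m → ℝ) (s : Finset (Fin m)) :
    Polynomial.reflect (2 * s.card) (∏ i ∈ s, (X ^ 2 - C (c i) * X + 1)) =
      ∏ i ∈ s, (X ^ 2 - C (c i) * X + 1) := by
  induction s using Finset.cons_induction with
  | empty => simp
  | cons a s ha ih =>
    rw [Finset.prod_cons, Finset.card_cons, Nat.mul_succ]
    rw [show 2 * s.card + 2 = 2 + 2 * s.card by ring]
    rw [reflect_mul _ _ (aux_natDegree_q (c a)) ?_]
    · rw [aux_reflect_q, ih]
    · exact le_trans (natDegree_prod_le _ _)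
        (by calc ∑ i ∈ s, (X ^ 2 - C (c i) * X + 1 : ℝ[X]).natDegree
              ≤ ∑ _i ∈ s, 2 := Finset.sum_le_sum (fun i _ => aux_natDegree_q (c i))
            _ = 2 * s.card := by rw [Finset.sum_const, smul_eq_mul, mul_comm])


lemma aux_eval (m : ℕ) (hm : 1 ≤ m) (θ : Fin m → ℝ) (k : ℕ) :
    Polynomial.eval ((Complex.exp (Real.pi / m * Complex.I)) ^ k)
      ((∏ i : Fin m, (X ^ 2 - C (2 * Real.cos (θ i)) * X + 1)).map (algebraMap ℝ ℂ)) =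
      (((-1 : ℝ) ^ k * ∏ i, (2 * (Real.cos (k * Real.pi / m) - Real.cos (θ i))) : ℝ) : ℂ) := by
  have hm0 : (m : ℝ) ≠ 0 := Nat.cast_ne_zero.mpr (by omega)
  set t : ℝ := k * Real.pi / m with ht
  have hz : (Complex.exp (Real.pi / m * Complex.I)) ^ k = Complex.exp (t * Complex.I) := by
    rw [← Complex.exp_nat_mul]
    congr 1
    push_cast [ht]
    ring
  have hfac : ∀ i : Fin m,
      Polynomial.eval (Complex.exp (t * Complex.I))
        ((X ^ 2 - C (2 * Real.cos (θ i)) * X + 1 : ℝ[X]).map (algebraMap ℝ ℂ))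
      = Complex.exp (t * Complex.I) * ((2 * (Real.cos t - Real.cos (θ i)) : ℝ) : ℂ) := by
    intro i
    have h2c : ∀ x : ℝ, ((2 * Real.cos x : ℝ) : ℂ)
        = Complex.exp (x * Complex.I) + Complex.exp (-x * Complex.I) := by
      intro x
      push_cast
      exact Complex.two_cos _
    simp only [Polynomial.map_add, Polynomial.map_sub, Polynomial.map_pow,
      Polynomial.map_mul, Polynomial.map_X, Polynomial.map_C, Polynomial.map_one,
      Polynomial.eval_add, Polynomial.eval_sub, Polynomial.eval_pow, Polynomial.eval_mul,
      Polynomial.eval_X, Polynomial.eval_C, Polynomial.eval_one]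
    have : ((algebraMap ℝ ℂ) (2 * Real.cos (θ i))) = ((2 * Real.cos (θ i) : ℝ) : ℂ) := rfl
    rw [this, h2c]
    push_cast
    rw [mul_sub, Complex.two_cos, Complex.two_cos]
    have hinv : Complex.exp (↑t * Complex.I) * Complex.exp (-↑t * Complex.I) = 1 := by
      rw [← Complex.exp_add, show (↑t * Complex.I + -↑t * Complex.I) = 0 by ring,
        Complex.exp_zero]
    linear_combination -hinv
  rw [hz, Polynomial.map_prod, Polynomial.eval_prod]
  simp only [hfac]
  rw [Finset.prod_mul_distrib, Finset.prod_const, Finset.card_univ, Fintype.card_fin]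
  have hm0c : (m : ℂ) ≠ 0 := Nat.cast_ne_zero.mpr (by omega)
  have hexpm : Complex.exp (↑t * Complex.I) ^ m = ((-1 : ℂ)) ^ k := by
    rw [← Complex.exp_nat_mul]
    have harg : ((m : ℂ)) * (↑t * Complex.I) = (k : ℂ) * ((Real.pi : ℂ) * Complex.I) := by
      push_cast [ht]
      field_simp
    rw [harg, Complex.exp_nat_mul, Complex.exp_pi_mul_I]
  rw [hexpm]
  push_cast
  ring


lemma aux_prod_neg {α : Type*} (s : Finset α) (f : α → ℝ) :
    ∏ i ∈ s, (-f i) = (-1 : ℝ) ^ s.card * ∏ i ∈ s, f i := by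
  rw [show (∏ i ∈ s, (-f i)) = ∏ i ∈ s, ((-1 : ℝ) * f i) from
    Finset.prod_congr rfl (fun i _ => (neg_one_mul (f i)).symm),
    Finset.prod_mul_distrib, Finset.prod_const]

lemma aux_sign (m k : ℕ) (hm : 1 ≤ m) (hk : k ≤ m) (θ : Fin m → ℝ)
    (hθ : ∀ i, 0 < θ i ∧ θ i < Real.pi) (hne : ∀ i, θ i ≠ k * Real.pi / m) :
    (if 0 < (-1 : ℝ) ^ k * ∏ i, 2 * (Real.cos (k * Real.pi / m) - Real.cos (θ i)) then (1 : ℝ)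
      else 0)
    = (1 + (-1 : ℝ) ^ (k + Fintype.card {i // θ i < k * Real.pi / m})) / 2 := by
  have hm0 : (0 : ℝ) < m := by exact_mod_cast hm
  set t : ℝ := k * Real.pi / m with htdef
  have ht0 : 0 ≤ t := by positivity
  have htpi : t ≤ Real.pi := by
    rw [htdef, div_le_iff₀ hm0]
    have : (k : ℝ) ≤ m := by exact_mod_cast hk
    nlinarith [Real.pi_pos]
  set T : Finset (Fin m) := Finset.univ.filter (fun i => θ i < t) with hT
  have hcard : Fintype.card {i // θ i < t} = T.card := Fintype.card_subtype _
  set f : Fin m → ℝ := fun i => 2 * (Real.cos t - Real.cos (θ i)) with hf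
  have hposT : ∀ i ∈ T, 0 < -f i := by
    intro i hi
    simp only [hT, Finset.mem_filter] at hi
    have : Real.cos t < Real.cos (θ i) :=
      Real.cos_lt_cos_of_nonneg_of_le_pi (le_of_lt (hθ i).1) htpi hi.2
    simp only [hf]; nlinarith
  have hposTc : ∀ i ∈ Tᶜ, 0 < f i := by
    intro i hi
    simp only [hT, Finset.mem_compl, Finset.mem_filter] at hi
    have hgt : t < θ i := by
      rcases lt_or_eq_of_le (not_lt.mp (by simpa using hi)) with h | h
      · exact h
      · exact absurd h.symm (hne i)
    have : Real.cos (θ i) < Real.cos t :=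
      Real.cos_lt_cos_of_nonneg_of_le_pi ht0 (le_of_lt (hθ i).2) hgt
    simp only [hf]; nlinarith
  have hkey : 0 < (-1 : ℝ) ^ T.card * ∏ i, f i := by
    have hprodsplit : ∏ i, f i = (∏ i ∈ T, f i) * ∏ i ∈ Tᶜ, f i :=
      (Finset.prod_mul_prod_compl T f).symm
    have hneg : (-1 : ℝ) ^ T.card * ∏ i ∈ T, f i = ∏ i ∈ T, (-f i) :=
      (aux_prod_neg T f).symm
    have h1 : 0 < ∏ i ∈ T, (-f i) := Finset.prod_pos hposT
    have h2 : 0 < ∏ i ∈ Tᶜ, f i := Finset.prod_pos hposTc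
    calc (0:ℝ) < (∏ i ∈ T, (-f i)) * ∏ i ∈ Tᶜ, f i := mul_pos h1 h2
    _ = (-1 : ℝ) ^ T.card * ∏ i, f i := by rw [← hneg, hprodsplit]; ring
  have hsq : ((-1 : ℝ) ^ T.card) * ((-1 : ℝ) ^ T.card) = 1 := by
    rw [← pow_add]
    exact Even.neg_one_pow ⟨T.card, rfl⟩
  rw [hcard]
  have hfactor : (-1 : ℝ) ^ k * ∏ i, f i
      = (-1 : ℝ) ^ (k + T.card) * ((-1 : ℝ) ^ T.card * ∏ i, f i) := by
    rw [pow_add, mul_assoc, ← mul_assoc ((-1 : ℝ) ^ T.card), hsq, one_mul]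
  rcases Nat.even_or_odd (k + T.card) with he | ho
  · have h1 : (-1 : ℝ) ^ (k + T.card) = 1 := he.neg_one_pow
    have hpos : 0 < (-1 : ℝ) ^ k * ∏ i, f i := by
      rw [hfactor, h1, one_mul]; exact hkey
    rw [if_pos hpos, h1]; norm_num
  · have h1 : (-1 : ℝ) ^ (k + T.card) = -1 := ho.neg_one_pow
    have hneg2 : ¬ (0 < (-1 : ℝ) ^ k * ∏ i, f i) := by
      rw [hfactor, h1, neg_one_mul]
      simp only [not_lt]
      linarith [hkey]
    rw [if_neg hneg2, h1]; norm_num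


lemma aux_inj (m : ℕ) (hm : 1 ≤ m) :
    Function.Injective (fun k : Fin (2 * m) => Complex.exp (Real.pi / m * Complex.I) ^ (k : ℕ)) := by
  have hm0 : (m : ℝ) ≠ 0 := Nat.cast_ne_zero.mpr (by omega)
  have hrep : ∀ k : ℕ, Complex.exp (Real.pi / m * Complex.I) ^ k
      = Complex.exp (((k * Real.pi / m : ℝ) : ℂ) * Complex.I) := by
    intro k
    rw [← Complex.exp_nat_mul]
    congr 1
    push_cast
    field_simp
  intro i j hij
  simp only [hrep] at hij
  rw [Complex.exp_eq_exp_iff_exists_int] at hij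
  obtain ⟨n, hn⟩ := hij
  have hI : (((i : ℕ) * Real.pi / m : ℝ) : ℂ)
      = (((j : ℕ) * Real.pi / m : ℝ) : ℂ) + 2 * n * (Real.pi : ℂ) := by
    apply mul_right_cancel₀ Complex.I_ne_zero
    rw [hn]
    ring
  have hR : ((i : ℕ) * Real.pi / m : ℝ) = (j : ℕ) * Real.pi / m + 2 * n * Real.pi := by
    exact_mod_cast hI
  have hpi := Real.pi_ne_zero
  have hZ : ((i : ℕ) : ℝ) = (j : ℕ) + 2 * n * m := by
    field_simp at hR
    have hR2 : ((i : ℕ) : ℝ) * Real.pi = (((j : ℕ) : ℝ) + 2 * n * m) * Real.pi := by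
      rw [hR]; ring
    have := mul_right_cancel₀ hpi hR2
    linarith [this]
  have hZ' : ((i : ℕ) : ℤ) = (j : ℕ) + 2 * n * m := by exact_mod_cast hZ
  have h2 : ((i : ℕ) : ℤ) - (j : ℕ) = 2 * (m : ℤ) * n := by linarith [hZ']
  have hi : ((i : ℕ) : ℤ) < 2 * m := by exact_mod_cast i.isLt
  have hj : ((j : ℕ) : ℤ) < 2 * m := by exact_mod_cast j.isLt
  have hi0 : (0 : ℤ) ≤ ((i : ℕ) : ℤ) := by positivity
  have hj0 : (0 : ℤ) ≤ ((j : ℕ) : ℤ) := by positivity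
  have hn0 : n = 0 := by
    rcases le_or_gt 1 n with h | h
    · have h3 : 2 * (m : ℤ) * 1 ≤ 2 * (m : ℤ) * n :=
        mul_le_mul_of_nonneg_left h (by positivity)
      linarith
    · rcases le_or_gt n (-1) with h' | h'
      · have h3 : 2 * (m : ℤ) * n ≤ 2 * (m : ℤ) * (-1) :=
          mul_le_mul_of_nonneg_left h' (by positivity)
        linarith
      · omega
  apply Fin.ext
  rw [hn0] at h2
  have : ((i : ℕ) : ℤ) = (j : ℕ) := by linarith
  exact_mod_cast this


lemma aux_key (N : ℕ) (c : ℕ → ℂ) (hsym : ∀ d, d ≤ N → c d = c (N - d))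
    (z : ℂ) (hz : z ^ N = 1) (i : ℕ) (hi : i < N) :
    ∑ j ∈ range N, ((if i ≤ j then c (j - i) else 0) + (if j ≤ i then c (i - j) else 0)) * z ^ j
      = z ^ i * ∑ d ∈ range (N + 1), c d * z ^ d := by
  have hfilter1 : (range N).filter (fun j => i ≤ j) = Ico i N := by
    ext x; simp [Finset.mem_filter, Finset.mem_range, Finset.mem_Ico, and_comm]
  have hfilter2 : (range N).filter (fun j => j ≤ i) = range (i + 1) := by
    ext x; simp only [Finset.mem_filter, Finset.mem_range, Nat.lt_succ_iff]
    omega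
  -- split LHS
  have hsplit : ∑ j ∈ range N,
      ((if i ≤ j then c (j - i) else 0) + (if j ≤ i then c (i - j) else 0)) * z ^ j
      = (∑ j ∈ Ico i N, c (j - i) * z ^ j) + ∑ j ∈ range (i + 1), c (i - j) * z ^ j := by
    rw [← hfilter1, ← hfilter2, Finset.sum_filter, Finset.sum_filter, ← Finset.sum_add_distrib]
    apply Finset.sum_congr rfl
    intro j _
    by_cases h1 : i ≤ j <;> by_cases h2 : j ≤ i <;> simp [h1, h2] <;> ring
  rw [hsplit]
  -- first piece
  have hA : ∑ j ∈ Ico i N, c (j - i) * z ^ j = ∑ d ∈ range (N - i), c d * z ^ (i + d) := by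
    rw [Finset.sum_Ico_eq_sum_range]
    apply Finset.sum_congr rfl
    intro d _
    congr 2
    omega
  -- second piece
  have hB : ∑ j ∈ range (i + 1), c (i - j) * z ^ j
      = ∑ j ∈ range (i + 1), c (N - i + j) * z ^ j := by
    apply Finset.sum_congr rfl
    intro j hj
    simp only [Finset.mem_range, Nat.lt_succ_iff] at hj
    rw [hsym (i - j) (by omega), show N - (i - j) = N - i + j by omega]
  -- RHS
  rw [Finset.mul_sum]
  have hRHS : ∀ d, z ^ i * (c d * z ^ d) = c d * z ^ (i + d) := by
    intro d; rw [pow_add]; ring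
  simp only [hRHS]
  have hR : ∑ d ∈ range (N + 1), c d * z ^ (i + d)
      = (∑ d ∈ range (N - i), c d * z ^ (i + d)) + ∑ t ∈ range (i + 1), c (N - i + t) * z ^ t := by
    rw [Finset.range_eq_Ico, ← Finset.sum_Ico_consecutive _ (Nat.zero_le (N - i))
      (by omega : N - i ≤ N + 1), ← Finset.range_eq_Ico]
    congr 1
    rw [Finset.sum_Ico_eq_sum_range]
    have hcard : N + 1 - (N - i) = i + 1 := by omega
    rw [hcard]
    apply Finset.sum_congr rfl
    intro t ht
    have h1 : i + (N - i + t) = N + t := by omega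
    rw [h1, pow_add, hz, one_mul]
  rw [hR, hA, hB]


lemma aux_count (m : ℕ) (hm : 1 ≤ m) (F : ℕ → ℝ) (e : ℕ → ℝ)
    (hF0 : F 0 = 1) (hFm : F m = 1)
    (hFj : ∀ j ∈ Finset.Ioo 0 m, F j = (1 + e j) / 2)
    (hrefl : ∀ k, m < k → k < 2 * m → F k = F (2 * m - k)) :
    ∑ k ∈ range (2 * m), F k = m + 1 + ∑ j ∈ Finset.Ioo 0 m, e j := by
  have hIoo : Finset.Ioo 0 m = Finset.Ico 1 m := rfl
  have hsplit : ∑ k ∈ range (2 * m), F k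
      = (∑ k ∈ range (m + 1), F k) + ∑ k ∈ Ico (m + 1) (2 * m), F k := by
    rw [Finset.range_eq_Ico, ← Finset.sum_Ico_consecutive _ (Nat.zero_le (m + 1)) (by omega),
      ← Finset.range_eq_Ico]
  have h1 : ∑ k ∈ range (m + 1), F k = F 0 + (∑ j ∈ Ico 1 m, F j) + F m := by
    rw [Finset.sum_range_succ, Finset.range_eq_Ico,
      Finset.sum_eq_sum_Ico_succ_bot (by omega : 0 < m) F]
  have h2 : ∑ k ∈ Ico (m + 1) (2 * m), F k = ∑ j ∈ Ico 1 m, F j := by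
    apply Finset.sum_nbij' (fun k => 2 * m - k) (fun j => 2 * m - j)
    · intro a ha; simp only [Finset.mem_Ico] at *; omega
    · intro a ha; simp only [Finset.mem_Ico] at *; omega
    · intro a ha; simp only [Finset.mem_Ico] at ha; omega
    · intro a ha; simp only [Finset.mem_Ico] at ha; omega
    · intro a ha
      simp only [Finset.mem_Ico] at ha
      exact hrefl a (by omega) (by omega)
  have hcard : (Finset.Ioo 0 m).card = m - 1 := by rw [Nat.card_Ioo]; omega
  rw [hsplit, h1, h2, hF0, hFm, hIoo]
  rw [show (1 : ℝ) + (∑ j ∈ Ico 1 m, F j) + 1 + ∑ j ∈ Ico 1 m, F j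
      = 2 + 2 * ∑ j ∈ Ico 1 m, F j by ring]
  rw [← hIoo, Finset.sum_congr rfl hFj]
  rw [Finset.mul_sum]
  have : ∀ j ∈ Finset.Ioo 0 m, 2 * ((1 + e j) / 2) = 1 + e j := by intros; ring
  rw [Finset.sum_congr rfl this, Finset.sum_add_distrib, Finset.sum_const, hcard]
  have hm1 : ((m - 1 : ℕ) : ℝ) = (m : ℝ) - 1 := by
    push_cast [hm]; ring
  rw [nsmul_eq_mul, hm1]
  ring

theorem stmt17 (m : ℕ) (hm : 1 ≤ m) (θ : Fin m → ℝ)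
    (hθ : ∀ i, 0 < θ i ∧ θ i < Real.pi)
    (hgen : ∀ i (j : ℕ), θ i ≠ j * Real.pi / m)
    (P : Polynomial ℝ)
    (hP : P = ∏ i : Fin m,
      (Polynomial.X ^ 2 - Polynomial.C (2 * Real.cos (θ i)) * Polynomial.X + 1))
    (S : Matrix (Fin (2 * m)) (Fin (2 * m)) ℝ)
    (hS : ∀ i j : Fin (2 * m), S i j =
      if (i : ℕ) ≤ (j : ℕ) then P.coeff ((j : ℕ) - (i : ℕ)) else 0)
    (hH : (S + Sᵀ).IsHermitian)
    (hnd : (S + Sᵀ).det ≠ 0)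
    (ν : ℕ → ℕ)
    (hν : ∀ j : ℕ, ν j = Fintype.card {i : Fin m // θ i < j * Real.pi / m}) :
    ((Fintype.card {k : Fin (2 * m) // 0 < hH.eigenvalues k} : ℝ)) =
      m + 1 + ∑ j ∈ Finset.Ioo 0 m, (-1 : ℝ) ^ (((ν j : ℤ)) - (j : ℤ)) := by
  classical
  have hm0 : (m : ℝ) ≠ 0 := Nat.cast_ne_zero.mpr (by omega)
  set A := S + Sᵀ with hA
  set eig := hH.eigenvalues with heig
  -- polynomial facts
  have hPdeg : P.natDegree ≤ 2 * m := by
    rw [hP]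
    refine le_trans (Polynomial.natDegree_prod_le _ _) ?_
    calc ∑ i : Fin m, (X ^ 2 - C (2 * Real.cos (θ i)) * X + 1 : ℝ[X]).natDegree
        ≤ ∑ _i : Fin m, 2 := Finset.sum_le_sum (fun i _ => aux_natDegree_q _)
      _ = 2 * m := by rw [Finset.sum_const, Finset.card_univ, Fintype.card_fin, smul_eq_mul, mul_comm]
  have hPrefl : Polynomial.reflect (2 * m) P = P := by
    rw [hP]
    have := aux_reflect_prod (fun i => 2 * Real.cos (θ i)) Finset.univ
    simpa [Finset.card_univ] using this
  have hsymR : ∀ d, d ≤ 2 * m → P.coeff d = P.coeff (2 * m - d) := by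
    intro d hd
    conv_lhs => rw [← hPrefl]
    rw [Polynomial.coeff_reflect, Polynomial.revAt_le hd]
  -- complex setup
  set ω : ℂ := Complex.exp (Real.pi / m * Complex.I) with hω
  set v : Fin (2 * m) → ℂ := fun k => ω ^ (k : ℕ) with hv
  have hω2m : ω ^ (2 * m) = 1 := by
    rw [hω, ← Complex.exp_nat_mul]
    rw [show ((2 * m : ℕ) : ℂ) * (↑Real.pi / ↑m * Complex.I) = 2 * ↑Real.pi * Complex.I by
      have hm0c : (m : ℂ) ≠ 0 := Nat.cast_ne_zero.mpr (by omega)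
      push_cast
      field_simp]
    exact Complex.exp_two_pi_mul_I
  set c : ℕ → ℂ := fun d => ((P.coeff d : ℝ) : ℂ) with hc
  have hcsym : ∀ d, d ≤ 2 * m → c d = c (2 * m - d) := by
    intro d hd
    simp only [hc]
    rw [hsymR d hd]
  set Pc : Polynomial ℂ := P.map (algebraMap ℝ ℂ) with hPc
  have hPcdeg : Pc.natDegree < 2 * m + 1 :=
    lt_of_le_of_lt (le_trans (Polynomial.natDegree_map_le) hPdeg) (by omega)
  have hEval : ∀ z : ℂ, Pc.eval z = ∑ d ∈ Finset.range (2 * m + 1), c d * z ^ d := by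
    intro z
    rw [Polynomial.eval_eq_sum_range' hPcdeg]
    exact Finset.sum_congr rfl (fun d _ => by rw [hPc, Polynomial.coeff_map]; rfl)
  set dC : Fin (2 * m) → ℂ := fun k => Pc.eval (v k) with hdC
  set V : Matrix (Fin (2 * m)) (Fin (2 * m)) ℂ := Matrix.vandermonde v with hV
  set Mc : Matrix (Fin (2 * m)) (Fin (2 * m)) ℂ := A.map (algebraMap ℝ ℂ) with hMc
  -- key identity
  have hzpow : ∀ j k : Fin (2 * m), V j k = (v k) ^ (j : ℕ) := by
    intro j k
    show v j ^ (k : ℕ) = (v k) ^ (j : ℕ)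
    simp only [hv]
    rw [← pow_mul, ← pow_mul, Nat.mul_comm]
  have hzz : ∀ k : Fin (2 * m), (v k) ^ (2 * m) = 1 := by
    intro k
    simp only [hv]
    rw [← pow_mul, Nat.mul_comm, pow_mul, hω2m, one_pow]
  have hkey : Mc * V = V * Matrix.diagonal dC := by
    ext i k
    rw [Matrix.mul_apply, Matrix.mul_diagonal]
    have hterm : ∀ j : Fin (2 * m), Mc i j * V j k
        = (fun n : ℕ => ((if (i : ℕ) ≤ n then c (n - (i : ℕ)) else 0)
            + (if n ≤ (i : ℕ) then c ((i : ℕ) - n) else 0)) * (v k) ^ n) (j : ℕ) := by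
      intro j
      rw [hzpow]
      simp only
      congr 1
      show algebraMap ℝ ℂ (A i j) = _
      rw [hA]
      show algebraMap ℝ ℂ (S i j + Sᵀ i j) = _
      rw [Matrix.transpose_apply, hS i j, hS j i, map_add,
        apply_ite (algebraMap ℝ ℂ), apply_ite (algebraMap ℝ ℂ), map_zero]
      rfl
    calc ∑ j, Mc i j * V j k
        = ∑ j : Fin (2 * m), (fun n : ℕ => ((if (i : ℕ) ≤ n then c (n - (i : ℕ)) else 0)
            + (if n ≤ (i : ℕ) then c ((i : ℕ) - n) else 0)) * (v k) ^ n) (j : ℕ) :=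
          Finset.sum_congr rfl (fun j _ => hterm j)
      _ = ∑ n ∈ Finset.range (2 * m), ((if (i : ℕ) ≤ n then c (n - (i : ℕ)) else 0)
            + (if n ≤ (i : ℕ) then c ((i : ℕ) - n) else 0)) * (v k) ^ n :=
          Fin.sum_univ_eq_sum_range (fun n : ℕ => ((if (i : ℕ) ≤ n then c (n - (i : ℕ)) else 0)
            + (if n ≤ (i : ℕ) then c ((i : ℕ) - n) else 0)) * (v k) ^ n) (2 * m)
      _ = (v k) ^ (i : ℕ) * ∑ d ∈ Finset.range (2 * m + 1), c d * (v k) ^ d :=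
          aux_key (2 * m) c hcsym (v k) (hzz k) (i : ℕ) i.isLt
      _ = V i k * dC k := by rw [← hEval, hzpow, hdC]
  have hdetV : IsUnit V.det := by
    apply isUnit_iff_ne_zero.mpr
    rw [hV]
    exact Matrix.det_vandermonde_ne_zero_iff.mpr (aux_inj m hm)
  have hMcsim : Mc = V * Matrix.diagonal dC * V⁻¹ := by
    rw [← hkey, Matrix.mul_nonsing_inv_cancel_right _ _ hdetV]
  have hcharC : Mc.charpoly = ∏ k, (X - C (dC k)) := by
    rw [hMcsim, aux_charpoly_conj _ _ hdetV, aux_charpoly_diagonal]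
  -- real spectral side
  set U : Matrix (Fin (2 * m)) (Fin (2 * m)) ℝ := (hH.eigenvectorUnitary : Matrix (Fin (2 * m)) (Fin (2 * m)) ℝ) with hU
  have hU1 : star U * U = 1 := ((Unitary.mem_iff).mp hH.eigenvectorUnitary.2).1
  have hUdet : IsUnit U.det := Matrix.isUnit_det_of_left_inverse hU1
  have hUinv : U⁻¹ = star U := Matrix.inv_eq_left_inv hU1
  have hspec : A = U * Matrix.diagonal eig * U⁻¹ := by
    rw [hUinv]
    have := hH.spectral_theorem
    convert this using 2
    rw [Unitary.conjStarAlgAut_apply]; simp [hU, heig]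
  have hcharR : A.charpoly = ∏ k, (X - C (eig k)) := by
    rw [hspec, aux_charpoly_conj _ _ hUdet, aux_charpoly_diagonal]
  have hmapchar : Mc.charpoly = ∏ k, (X - C ((eig k : ℝ) : ℂ)) := by
    rw [hMc, Matrix.charpoly_map, hcharR, Polynomial.map_prod]
    apply Finset.prod_congr rfl
    intro k _
    rw [Polynomial.map_sub, Polynomial.map_X, Polynomial.map_C]
    rfl
  have hpoly : (∏ k, (X - C ((eig k : ℝ) : ℂ))) = ∏ k, (X - C (dC k)) := by
    rw [← hmapchar, hcharC]
  -- multiset equality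
  have hms : (Finset.univ.val.map fun k : Fin (2 * m) => ((eig k : ℝ) : ℂ))
      = Finset.univ.val.map dC := by
    have h1 := Polynomial.roots_multiset_prod_X_sub_C
      (Finset.univ.val.map fun k : Fin (2 * m) => ((eig k : ℝ) : ℂ))
    have h2 := Polynomial.roots_multiset_prod_X_sub_C (Finset.univ.val.map dC)
    rw [← h1, ← h2]
    congr 1
    rw [Multiset.map_map, Multiset.map_map]
    have e1 : (∏ k, (X - C ((eig k : ℝ) : ℂ)))
        = (Finset.univ.val.map ((fun a : ℂ => X - C a) ∘ fun k : Fin (2 * m) => ((eig k : ℝ) : ℂ))).prod :=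
      Finset.prod_eq_multiset_prod _ _
    have e2 : (∏ k, (X - C (dC k)))
        = (Finset.univ.val.map ((fun a : ℂ => X - C a) ∘ dC)).prod :=
      Finset.prod_eq_multiset_prod _ _
    rw [← e1, ← e2]
    exact hpoly
  -- real values of dC
  set g : ℕ → ℝ := fun k => (-1 : ℝ) ^ k * ∏ i, 2 * (Real.cos (k * Real.pi / m) - Real.cos (θ i))
    with hg
  have hdCg : ∀ k : Fin (2 * m), dC k = ((g (k : ℕ) : ℝ) : ℂ) := by
    intro k
    show Pc.eval (v k) = _
    simp only [hv, hPc, hP, hω]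
    exact aux_eval m hm θ (k : ℕ)
  have hmsR : Finset.univ.val.map (fun k : Fin (2 * m) => eig k)
      = Finset.univ.val.map (fun k : Fin (2 * m) => g (k : ℕ)) := by
    apply Multiset.map_injective Complex.ofReal_injective
    rw [Multiset.map_map, Multiset.map_map]
    calc Finset.univ.val.map ((fun x : ℝ => (x : ℂ)) ∘ fun k : Fin (2 * m) => eig k)
        = Finset.univ.val.map (fun k : Fin (2 * m) => ((eig k : ℝ) : ℂ)) := rfl
      _ = Finset.univ.val.map dC := hms
      _ = Finset.univ.val.map ((fun x : ℝ => (x : ℂ)) ∘ fun k : Fin (2 * m) => g (k : ℕ)) :=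
          Multiset.map_congr rfl (fun k _ => hdCg k)
  -- counting
  have hcount : Fintype.card {k : Fin (2 * m) // 0 < eig k}
      = (Finset.univ.filter (fun k : Fin (2 * m) => 0 < g (k : ℕ))).card := by
    rw [Fintype.card_subtype]
    have e1 : (Finset.univ.filter (fun k : Fin (2 * m) => 0 < eig k)).card
        = Multiset.countP (fun x : ℝ => 0 < x) (Finset.univ.val.map eig) := by
      rw [Multiset.countP_map]
      rfl
    have e2 : (Finset.univ.filter (fun k : Fin (2 * m) => 0 < g (k : ℕ))).card
        = Multiset.countP (fun x : ℝ => 0 < x)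
            (Finset.univ.val.map (fun k : Fin (2 * m) => g (k : ℕ))) := by
      rw [Multiset.countP_map]
      rfl
    rw [e1, e2, hmsR]
  rw [hcount]
  -- cast to real sum
  have hcast : (((Finset.univ.filter (fun k : Fin (2 * m) => 0 < g (k : ℕ))).card : ℕ) : ℝ)
      = ∑ k ∈ Finset.range (2 * m), (if 0 < g k then (1 : ℝ) else 0) := by
    rw [Finset.card_filter, ← Fin.sum_univ_eq_sum_range (fun k => if 0 < g k then (1 : ℝ) else 0) (2 * m)]
    push_cast
    apply Finset.sum_congr rfl
    intro k _
    split <;> norm_num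
  rw [hcast]
  -- final arithmetic
  have hsign' : ∀ k, k ≤ m → (if 0 < g k then (1 : ℝ) else 0)
      = (1 + (-1 : ℝ) ^ (k + ν k)) / 2 := by
    intro k hk
    rw [hν k]
    exact aux_sign m k hm hk θ hθ (fun i => hgen i k)
  have hF0 : (if 0 < g 0 then (1 : ℝ) else 0) = 1 := by
    rw [hsign' 0 (by omega)]
    have : ν 0 = 0 := by
      rw [hν 0]
      apply Fintype.card_eq_zero_iff.mpr
      refine ⟨fun x => ?_⟩
      obtain ⟨i, hi⟩ := x
      have := (hθ i).1
      simp only [Nat.cast_zero, zero_mul, zero_div] at hi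
      linarith
    rw [this]
    norm_num
  have hFm : (if 0 < g m then (1 : ℝ) else 0) = 1 := by
    rw [hsign' m le_rfl]
    have hνm : ν m = m := by
      rw [hν m]
      have : ∀ i : Fin m, θ i < (m : ℝ) * Real.pi / m := by
        intro i
        rw [show (m : ℝ) * Real.pi / m = Real.pi by field_simp]
        exact (hθ i).2
      calc Fintype.card {i : Fin m // θ i < (m : ℝ) * Real.pi / m}
          = Fintype.card (Fin m) := Fintype.card_congr (Equiv.subtypeUnivEquiv this)
        _ = m := Fintype.card_fin m
    rw [hνm]
    have : Even (m + m) := ⟨m, rfl⟩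
    rw [this.neg_one_pow]
    norm_num
  have hrefl : ∀ k, m < k → k < 2 * m → (if 0 < g k then (1 : ℝ) else 0)
      = (if 0 < g (2 * m - k) then (1 : ℝ) else 0) := by
    intro k hk1 hk2
    have hgg : g k = g (2 * m - k) := by
      simp only [hg]
      have hcast2 : ((2 * m - k : ℕ) : ℝ) = 2 * m - k := by
        push_cast [Nat.cast_sub (by omega : k ≤ 2 * m)]
        ring
      have hcos : Real.cos (((2 * m - k : ℕ) : ℝ) * Real.pi / m)
          = Real.cos ((k : ℝ) * Real.pi / m) := by
        rw [hcast2, show ((2 * (m : ℝ) - k) * Real.pi / m) = 2 * Real.pi - (k : ℝ) * Real.pi / m by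
          field_simp]
        exact Real.cos_two_pi_sub _
      have hpow : (-1 : ℝ) ^ k = (-1 : ℝ) ^ (2 * m - k) := by
        rcases Nat.even_or_odd k with h | h
        · have h2 : Even (2 * m - k) := by
            rcases h with ⟨t, ht⟩
            exact ⟨m - t, by omega⟩
          rw [h.neg_one_pow, h2.neg_one_pow]
        · have h2 : Odd (2 * m - k) := by
            rcases h with ⟨t, ht⟩
            exact ⟨m - t - 1, by omega⟩
          rw [h.neg_one_pow, h2.neg_one_pow]
      rw [hcos, hpow]
    rw [hgg]
  have hmain := aux_count m hm (fun k => if 0 < g k then (1 : ℝ) else 0)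
    (fun j => (-1 : ℝ) ^ (j + ν j))
    hF0 hFm
    (fun j hj => by
      have := Finset.mem_Ioo.mp hj
      exact hsign' j (le_of_lt this.2))
    hrefl
  rw [hmain]
  congr 1
  apply Finset.sum_congr rfl
  intro j _
  have hinv : ((-1 : ℝ) ^ j)⁻¹ = (-1 : ℝ) ^ j := by
    rcases Nat.even_or_odd j with h | h
    · rw [h.neg_one_pow]; norm_num
    · rw [h.neg_one_pow]; norm_num
  rw [zpow_sub₀ (by norm_num : (-1 : ℝ) ≠ 0), zpow_natCast, zpow_natCast, div_eq_mul_inv,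
    hinv]
  show (-1 : ℝ) ^ (j + ν j) = (-1 : ℝ) ^ (ν j) * (-1 : ℝ) ^ j
  rw [pow_add]
  ring
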